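/- Let m ≥ 1 and let A : ℝ → ℝ^{m×m}, P : ℝ → ℝ^{m×m}, H : ℝ → ℝ^{m×m} be matrix-valued functions with P differentiable with derivative P′, each P(τ) symmetric. Let h₀, p̄, q̄, C be positive constants. Assume for all τ ∈ ℝ and all x ∈ ℝᵐ: (i) ⟨x, (P′(τ) + A(τ)ᵀP(τ) + P(τ)A(τ)) x⟩ ≤ −⟨x, H(τ) x⟩; (ii) ⟨x, H(τ) x⟩ ≥ h₀‖x‖²; (iii) the operator norms satisfy ‖P(τ)‖ ≤ p̄ and ‖P′(τ)‖ ≤ q̄. Let h : ℝᵐ × ℝ → ℝᵐ and g : ℝᵐ × ℝ → ℝ satisfy ‖h(x,τ)‖ ≤ C‖x‖² and |g(x,τ)| ≤ C‖x‖ for all (x,τ). Set r := h₀ / (2C(q̄ + 2p̄)). Then for every differentiable curve (x,τ) : I → ℝᵐ × ℝ on an interval I satisfying x′(t) = A(τ(t)) x(t) + h(x(t), τ(t)) and τ′(t) = 1 + g(x(t), τ(t)), and for every t ∈ I with ‖x(t)‖ ≤ r, the function v(t) := ⟨x(t), P(τ(t)) x(t)⟩ is differentiable at t with v′(t) ≤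 −(h₀/2)‖x(t)‖². -/

import Mathlib

open scoped RealInnerProductSpace

/-- Matrix–vector multiplication as a map between Euclidean spaces. -/
noncomputable def mulVecE {m n : ℕ} (A : Matrix (Fin m) (Fin n) ℝ)
    (v : EuclideanSpace ℝ (Fin n)) : EuclideanSpace ℝ (Fin m) :=
  (EuclideanSpace.equiv (Fin m) ℝ).symm (A.mulVec (EuclideanSpace.equiv (Fin n) ℝ v))

lemma mulVecE_apply {m n : ℕ} (A : Matrix (Fin m) (Fin n) ℝ) (v : EuclideanSpace ℝ (Fin n)) (i : Fin m) :
    mulVecE A v i = ∑ j, A i j * v j := by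
  simp [mulVecE, Matrix.mulVec, dotProduct]

lemma inner_mulVecE {m : ℕ} (M : Matrix (Fin m) (Fin m) ℝ) (u v : EuclideanSpace ℝ (Fin m)) :
    ⟪u, mulVecE M v⟫ = ∑ i, u i * ∑ j, M i j * v j := by
  simp [PiLp.inner_apply, mulVecE_apply, RCLike.inner_apply, mul_comm]

lemma mulVecE_add {m : ℕ} (M N : Matrix (Fin m) (Fin m) ℝ) (v : EuclideanSpace ℝ (Fin m)) :
    mulVecE (M + N) v = mulVecE M v + mulVecE N v := by
  ext i; simp [mulVecE_apply, add_mul, Finset.sum_add_distrib]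

lemma mulVecE_mul {m : ℕ} (M N : Matrix (Fin m) (Fin m) ℝ) (v : EuclideanSpace ℝ (Fin m)) :
    mulVecE (M * N) v = mulVecE M (mulVecE N v) := by
  simp [mulVecE, ← Matrix.mulVec_mulVec]
  rfl

lemma mulVecE_add_vec {m : ℕ} (M : Matrix (Fin m) (Fin m) ℝ) (u v : EuclideanSpace ℝ (Fin m)) :
    mulVecE M (u + v) = mulVecE M u + mulVecE M v := by
  ext i; simp [mulVecE_apply, mul_add, Finset.sum_add_distrib]

lemma inner_mulVecE_transpose {m : ℕ} (M : Matrix (Fin m) (Fin m) ℝ) (u v : EuclideanSpace ℝ (Fin m)) :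
    ⟪u, mulVecE M.transpose v⟫ = ⟪mulVecE M u, v⟫ := by
  simp only [inner_mulVecE]
  rw [real_inner_comm]
  simp only [inner_mulVecE]
  simp only [Finset.mul_sum]
  rw [Finset.sum_comm]
  simp only [Matrix.transpose_apply]
  congr 1; funext i; congr 1; funext j; ring
section Main
variable {m : ℕ}

lemma euclid_proj_hasDerivAt {x : ℝ → EuclideanSpace ℝ (Fin m)} {xd : EuclideanSpace ℝ (Fin m)}
    {t : ℝ} (hx : HasDerivAt x xd t) (i : Fin m) :
    HasDerivAt (fun s => x s i) (xd i) t := by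
  let L : EuclideanSpace ℝ (Fin m) →L[ℝ] ℝ :=
    (ContinuousLinearMap.proj i).comp (EuclideanSpace.equiv (Fin m) ℝ : EuclideanSpace ℝ (Fin m) →L[ℝ] (Fin m → ℝ))
  exact (L.hasFDerivAt).comp_hasDerivAt t hx

end Main


/-- The quantitative estimate underlying the implication 3 → 1 in Theorem 3 of the
paper: along the transverse dynamics `ẋ = A(τ)x + h(x,τ)`, `τ̇ = 1 + g(x,τ)` with
`‖h(x,τ)‖ ≤ C‖x‖²`, `|g(x,τ)| ≤ C‖x‖`, the quadratic Lyapunov function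
`v(t) = ⟪x(t), P(τ(t))x(t)⟫` (with `P` satisfying the periodic Lyapunov inequality
`Ṗ + AᵀP + PA ≤ −H`, `H ≥ h₀ I`, `‖P‖ ≤ p̄`, `‖Ṗ‖ ≤ q̄`) satisfies
`v′(t) ≤ −(h₀/2)‖x(t)‖²` whenever `‖x(t)‖ ≤ r := h₀/(2C(q̄ + 2p̄))`. -/
theorem quadratic_lyapunov_decrease_in_tube
    (m : ℕ) (hm : 1 ≤ m)
    (A P P' H : ℝ → Matrix (Fin m) (Fin m) ℝ)
    (hPderiv : ∀ τ i j, HasDerivAt (fun s => P s i j) (P' τ i j) τ)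
    (hPsymm : ∀ τ, (P τ).transpose = P τ)
    (h₀ pbar qbar C : ℝ)
    (hh₀ : 0 < h₀) (hpbar : 0 < pbar) (hqbar : 0 < qbar) (hC : 0 < C)
    (hLyap : ∀ τ, ∀ x : EuclideanSpace ℝ (Fin m),
      ⟪x, mulVecE (P' τ + (A τ).transpose * P τ + P τ * A τ) x⟫ ≤
        -⟪x, mulVecE (H τ) x⟫)
    (hH : ∀ τ, ∀ x : EuclideanSpace ℝ (Fin m), h₀ * ‖x‖ ^ 2 ≤ ⟪x, mulVecE (H τ) x⟫)
    (hPbound : ∀ τ, ∀ x : EuclideanSpace ℝ (Fin m), ‖mulVecE (P τ) x‖ ≤ pbar * ‖x‖)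
    (hP'bound : ∀ τ, ∀ x : EuclideanSpace ℝ (Fin m), ‖mulVecE (P' τ) x‖ ≤ qbar * ‖x‖)
    (h : EuclideanSpace ℝ (Fin m) × ℝ → EuclideanSpace ℝ (Fin m))
    (g : EuclideanSpace ℝ (Fin m) × ℝ → ℝ)
    (hhb : ∀ x τ, ‖h (x, τ)‖ ≤ C * ‖x‖ ^ 2)
    (hgb : ∀ x τ, |g (x, τ)| ≤ C * ‖x‖)
    (r : ℝ) (hr : r = h₀ / (2 * C * (qbar + 2 * pbar)))
    (I : Set ℝ) (x : ℝ → EuclideanSpace ℝ (Fin m)) (τ : ℝ → ℝ)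
    (hxd : ∀ t ∈ I, HasDerivAt x (mulVecE (A (τ t)) (x t) + h (x t, τ t)) t)
    (hτd : ∀ t ∈ I, HasDerivAt τ (1 + g (x t, τ t)) t)
    (t : ℝ) (ht : t ∈ I) (hxt : ‖x t‖ ≤ r) :
    ∃ v' : ℝ, HasDerivAt (fun s => ⟪x s, mulVecE (P (τ s)) (x s)⟫) v' t ∧
      v' ≤ -(h₀ / 2) * ‖x t‖ ^ 2 := by
  have hx := hxd t ht
  have hτ := hτd t ht
  set xd : EuclideanSpace ℝ (Fin m) := mulVecE (A (τ t)) (x t) + h (x t, τ t) with hxddef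
  set τd : ℝ := 1 + g (x t, τ t) with hτddef
  have hxi : ∀ i, HasDerivAt (fun s => x s i) (xd i) t := fun i => euclid_proj_hasDerivAt hx i
  have hPij : ∀ i j, HasDerivAt (fun s => P (τ s) i j) (P' (τ t) i j * τd) t :=
    fun i j => (hPderiv (τ t) i j).comp t hτ
  -- derivative of each inner sum
  have hSi : ∀ i : Fin m, HasDerivAt (fun s => ∑ j, P (τ s) i j * x s j)
      (∑ j, (P' (τ t) i j * τd * x t j + P (τ t) i j * xd j)) t := by
    intro i
    exact HasDerivAt.fun_sum fun j _ => (hPij i j).mul (hxi j)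
  set D : ℝ := ∑ i, (xd i * ∑ j, P (τ t) i j * x t j +
      x t i * ∑ j, (P' (τ t) i j * τd * x t j + P (τ t) i j * xd j)) with hDdef
  have hF : HasDerivAt (fun s => ⟪x s, mulVecE (P (τ s)) (x s)⟫) D t := by
    have h1 : HasDerivAt (fun s => ∑ i, x s i * ∑ j, P (τ s) i j * x s j) D t :=
      HasDerivAt.fun_sum fun i _ => (hxi i).mul (hSi i)
    have : (fun s => ⟪x s, mulVecE (P (τ s)) (x s)⟫)
        = (fun s => ∑ i, x s i * ∑ j, P (τ s) i j * x s j) := by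
      funext s; rw [inner_mulVecE]
    rw [this]; exact h1
  have hD : D = ⟪x t, mulVecE (P (τ t)) xd⟫ + τd * ⟪x t, mulVecE (P' (τ t)) (x t)⟫
      + ⟪xd, mulVecE (P (τ t)) (x t)⟫ := by
    rw [hDdef]
    simp only [inner_mulVecE, Finset.mul_sum, mul_add, add_mul, Finset.sum_add_distrib]
    ring_nf
    have hc : ∀ (a b : Fin m), x t a * (P' (τ t) a b + P' (τ t) a b * g (x t, τ t)) * x t b
        = (1 + g (x t, τ t)) * x t a * P' (τ t) a b * x t b := fun a b => by ring
    have hc' : ∀ (a b : Fin m), x t a * P' (τ t) a b * τd * x t b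
        = τd * x t a * P' (τ t) a b * x t b := fun a b => by ring
    have e : ∑ a, ∑ b, x t a * P' (τ t) a b * τd * x t b
        = ∑ a, ∑ b, τd * x t a * P' (τ t) a b * x t b := by simp only [hc']
    linarith [e]
  -- symmetry : ⟪xd, P x⟫ = ⟪x, P xd⟫
  have hsym : ⟪xd, mulVecE (P (τ t)) (x t)⟫ = ⟪x t, mulVecE (P (τ t)) xd⟫ := by
    calc ⟪xd, mulVecE (P (τ t)) (x t)⟫ = ⟪mulVecE (P (τ t)) (x t), xd⟫ := real_inner_comm _ _
      _ = ⟪x t, mulVecE (P (τ t)).transpose xd⟫ := (inner_mulVecE_transpose (P (τ t)) (x t) xd).symm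
      _ = ⟪x t, mulVecE (P (τ t)) xd⟫ := by rw [hPsymm]
  set n : ℝ := ‖x t‖ with hndef
  have hn0 : 0 ≤ n := norm_nonneg _
  -- decompose
  have hsplit : D = ⟪x t, mulVecE (P' (τ t) + (A (τ t)).transpose * P (τ t) + P (τ t) * A (τ t)) (x t)⟫
      + g (x t, τ t) * ⟪x t, mulVecE (P' (τ t)) (x t)⟫
      + 2 * ⟪x t, mulVecE (P (τ t)) (h (x t, τ t))⟫ := by
    rw [hD, hsym, hxddef, mulVecE_add_vec, inner_add_right, hτddef]
    rw [mulVecE_add, mulVecE_add, inner_add_right, inner_add_right, mulVecE_mul, mulVecE_mul]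
    have e1 : ⟪x t, mulVecE (A (τ t)).transpose (mulVecE (P (τ t)) (x t))⟫
        = ⟪x t, mulVecE (P (τ t)) (mulVecE (A (τ t)) (x t))⟫ := by
      calc ⟪x t, mulVecE (A (τ t)).transpose (mulVecE (P (τ t)) (x t))⟫
          = ⟪mulVecE (A (τ t)) (x t), mulVecE (P (τ t)) (x t)⟫ := inner_mulVecE_transpose _ _ _
        _ = ⟪mulVecE (P (τ t)) (x t), mulVecE (A (τ t)) (x t)⟫ := real_inner_comm _ _
        _ = ⟪x t, mulVecE (P (τ t)).transpose (mulVecE (A (τ t)) (x t))⟫ :=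
            (inner_mulVecE_transpose _ _ _).symm
        _ = ⟪x t, mulVecE (P (τ t)) (mulVecE (A (τ t)) (x t))⟫ := by rw [hPsymm]
    rw [e1]; ring
  -- bounds
  have b1 : ⟪x t, mulVecE (P' (τ t) + (A (τ t)).transpose * P (τ t) + P (τ t) * A (τ t)) (x t)⟫
      ≤ -(h₀ * n ^ 2) := by
    refine le_trans (hLyap (τ t) (x t)) ?_
    have := hH (τ t) (x t); linarith
  have b2 : g (x t, τ t) * ⟪x t, mulVecE (P' (τ t)) (x t)⟫ ≤ C * n * (qbar * (n * n)) := by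
    calc g (x t, τ t) * ⟪x t, mulVecE (P' (τ t)) (x t)⟫
        ≤ |g (x t, τ t) * ⟪x t, mulVecE (P' (τ t)) (x t)⟫| := le_abs_self _
      _ = |g (x t, τ t)| * |⟪x t, mulVecE (P' (τ t)) (x t)⟫| := abs_mul _ _
      _ ≤ (C * n) * (n * (qbar * n)) := by
          refine mul_le_mul (hgb _ _) ?_ (abs_nonneg _) (by positivity)
          refine le_trans (abs_real_inner_le_norm _ _) ?_
          exact mul_le_mul_of_nonneg_left (hP'bound _ _) hn0
      _ = C * n * (qbar * (n * n)) := by ring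
  have b3 : 2 * ⟪x t, mulVecE (P (τ t)) (h (x t, τ t))⟫ ≤ 2 * (n * (pbar * (C * n ^ 2))) := by
    have : ⟪x t, mulVecE (P (τ t)) (h (x t, τ t))⟫ ≤ n * (pbar * (C * n ^ 2)) := by
      refine le_trans (real_inner_le_norm _ _) ?_
      refine mul_le_mul_of_nonneg_left ?_ hn0
      refine le_trans (hPbound _ _) ?_
      exact mul_le_mul_of_nonneg_left (hhb _ _) hpbar.le
    linarith
  refine ⟨D, hF, ?_⟩
  have hrC : 2 * C * (qbar + 2 * pbar) * r = h₀ := by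
    rw [hr]; field_simp
  have hcube : n * n ^ 2 ≤ r * n ^ 2 := mul_le_mul_of_nonneg_right hxt (sq_nonneg n)
  have hpos : (0:ℝ) ≤ C * (qbar + 2 * pbar) := by positivity
  have key : C * (qbar + 2 * pbar) * (r * n ^ 2 - n * n ^ 2) ≥ 0 :=
    mul_nonneg hpos (by linarith)
  rw [hsplit]
  nlinarith [b1, b2, b3, key, hrC, sq_nonneg n]
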